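/- arXiv:2307.07284 — 7 statements merged into one kernel-verified Lean document; each statement's English description precedes it below -/
import Mathlib

section
/- Let G be a finite simple graph and H a maximal 2-3-subgraph of G. Let F be any set of vertices of G that contains every branchpoint of H, every linkpoint of H, and at least one vertex of every isolated cycle of H. Then F is a feedback vertex set of G, i.e., the subgraph of G induced on V(G) \ F is acyclic. -/
open SimpleGraph

variable {V : Type*}

/-- The degree of a vertex `v` in a subgraph `H` of a simple graph: the number of
edges of `H` incident to `v`. -/
noncomputable def subDeg {G : SimpleGraph V} (H : G.Subgraph) (v : V) : ℕ :=
  (H.neighborSet v).ncard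

/-- `H` is a 2-3-subgraph of `G`: every vertex of `H` has degree exactly 2 or
exactly 3 in `H`. -/
def Is23Subgraph {G : SimpleGraph V} (H : G.Subgraph) : Prop :=
  ∀ v ∈ H.verts, subDeg H v = 2 ∨ subDeg H v = 3

/-- `H` is a maximal 2-3-subgraph of `G`: it is a 2-3-subgraph and no strictly larger
subgraph of `G` is a 2-3-subgraph. -/
def Maximal23Subgraph {G : SimpleGraph V} (H : G.Subgraph) : Prop :=
  Is23Subgraph H ∧ ∀ H' : G.Subgraph, Is23Subgraph H' → H ≤ H' → H' = H

namespace Sub23Aux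

open SimpleGraph.Walk

variable {G : SimpleGraph V}

lemma closed_nil {v : V} (p : G.Walk v v) (h : p.support.Nodup) : p.Nil := by
  cases p with
  | nil => simp
  | cons h' p' =>
    rw [support_cons, List.nodup_cons] at h
    exact absurd p'.end_mem_support h.1

lemma nil_endpoints {x y : V} (p : G.Walk x y) (h : p.Nil) : x = y := by
  cases p with
  | nil => rfl
  | cons h' p' => simp at h

lemma end_mem_tail {v : V} (p : G.Walk v v) (hp : ¬ p.Nil) : v ∈ p.support.tail := by
  cases p with
  | nil => simp at hp
  | cons h' p' => simp [p'.end_mem_support]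

lemma mem_closed_iff {v x : V} (p : G.Walk v v) (hp : ¬ p.Nil) :
    x ∈ p.support ↔ x ∈ p.support.tail := by
  constructor
  · intro hx
    rw [p.support_eq_cons, List.mem_cons] at hx
    rcases hx with rfl | hx
    · exact end_mem_tail p hp
    · exact hx
  · intro hx
    rw [p.support_eq_cons]
    exact List.mem_cons_of_mem _ hx

lemma nbr_empty {x y v : V} (p : G.Walk x y) (hv : v ∉ p.support) :
    p.toSubgraph.neighborSet v = ∅ := by
  ext w
  simp only [Set.mem_empty_iff_false, iff_false, Subgraph.mem_neighborSet]
  intro h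
  exact hv ((p.mem_verts_toSubgraph).mp h.fst_mem)

lemma nbr_start' {x y : V} (p : G.Walk x y) (hnd : p.support.Nodup) (hne : x ≠ y) :
    ∃ z, z ∈ p.support ∧ z ≠ x ∧ p.toSubgraph.neighborSet x = {z} := by
  cases p with
  | nil => exact absurd rfl hne
  | @cons _ z _ h p' =>
    rw [support_cons, List.nodup_cons] at hnd
    refine ⟨z, by simp [p'.start_mem_support], h.ne', ?_⟩
    simp only [Walk.toSubgraph, Subgraph.neighborSet_sup, neighborSet_fst_subgraphOfAdj,
      nbr_empty p' hnd.1, Set.union_empty]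

lemma nbr_start {x y : V} (p : G.Walk x y) (hnd : p.support.Nodup) (hlen : 2 ≤ p.length) :
    ∃ z, z ∈ p.support ∧ z ≠ x ∧ z ≠ y ∧ p.toSubgraph.neighborSet x = {z} := by
  cases p with
  | nil => simp at hlen
  | @cons _ z _ h p' =>
    rw [support_cons, List.nodup_cons] at hnd
    refine ⟨z, by simp [p'.start_mem_support], h.ne', ?_, ?_⟩
    · rintro rfl
      have hn := closed_nil p' hnd.2
      rw [nil_iff_length_eq] at hn
      rw [length_cons, hn] at hlen
      omega
    · simp only [Walk.toSubgraph, Subgraph.neighborSet_sup, neighborSet_fst_subgraphOfAdj,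
        nbr_empty p' hnd.1, Set.union_empty]

lemma nbr_internal (v : V) : ∀ {x y : V} (p : G.Walk x y), p.support.Nodup →
    v ∈ p.support → v ≠ x → v ≠ y → (p.toSubgraph.neighborSet v).ncard = 2 := by
  intro x y p
  induction p with
  | nil =>
    intro _ hv hvx _
    rw [support_nil, List.mem_singleton] at hv
    exact absurd hv hvx
  | @cons a b c h p' ih =>
    intro hnd hv hvx hvy
    rw [support_cons, List.nodup_cons] at hnd
    rw [support_cons, List.mem_cons] at hv
    have hv' : v ∈ p'.support := hv.resolve_left hvx
    simp only [Walk.toSubgraph, Subgraph.neighborSet_sup]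
    by_cases hvb : v = b
    · subst hvb
      rw [neighborSet_snd_subgraphOfAdj]
      obtain ⟨z2, hz2mem, hz2v, hz2nb⟩ := nbr_start' p' hnd.2 hvy
      rw [hz2nb, Set.singleton_union]
      exact Set.ncard_pair (fun he => hnd.1 (he ▸ hz2mem))
    · rw [neighborSet_subgraphOfAdj_of_ne_of_ne h hvx hvb, Set.empty_union]
      exact ih hnd.2 hv' hvb hvy

lemma cycle_nbr {u v : V} (c : G.Walk u u) (hc : c.IsCycle) (hv : v ∈ c.support) :
    (c.toSubgraph.neighborSet v).ncard = 2 := by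
  cases c with
  | nil => exact absurd rfl hc.ne_nil
  | @cons _ z _ h p =>
    have hnd : p.support.Nodup := by
      have := hc.support_nodup
      rwa [support_cons, List.tail_cons] at this
    have hlen : 2 ≤ p.length := by
      have := hc.three_le_length
      rw [length_cons] at this
      omega
    by_cases hvu : v = u
    · subst hvu
      simp only [Walk.toSubgraph, Subgraph.neighborSet_sup, neighborSet_fst_subgraphOfAdj]
      have hrnd : p.reverse.support.Nodup := by
        rw [support_reverse]; exact List.nodup_reverse.mpr hnd
      have hrlen : 2 ≤ p.reverse.length := by rw [length_reverse]; exact hlen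
      obtain ⟨z2, hz2mem, hz2v, hz2z, hz2nb⟩ := nbr_start p.reverse hrnd hrlen
      rw [show p.toSubgraph = p.reverse.toSubgraph from (toSubgraph_reverse p).symm, hz2nb,
        Set.singleton_union]
      exact Set.ncard_pair (Ne.symm hz2z)
    · have hvp : v ∈ p.support := by
        rw [support_cons, List.mem_cons] at hv
        exact hv.resolve_left hvu
      simp only [Walk.toSubgraph, Subgraph.neighborSet_sup]
      by_cases hvz : v = z
      · subst hvz
        rw [neighborSet_snd_subgraphOfAdj]
        obtain ⟨z3, hz3mem, hz3v, hz3u, hz3nb⟩ := nbr_start p hnd hlen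
        rw [hz3nb, Set.singleton_union]
        exact Set.ncard_pair (fun he => hz3u he.symm)
      · rw [neighborSet_subgraphOfAdj_of_ne_of_ne h hvu hvz, Set.empty_union]
        exact nbr_internal v p hnd hvp hvz hvu

lemma extract (S : Set V) : ∀ {x y : V} (p : G.Walk x y), x ∉ S → ∀ a ∈ p.support, a ∈ S →
    ∃ (b : V) (q : G.Walk x b) (r : G.Walk b y), b ∈ S ∧ p = q.append r ∧
      ∀ v ∈ q.support, v ∈ S → v = b := by
  intro x y p
  induction p with
  | nil =>
    intro hx a ha haS
    rw [mem_support_nil_iff] at ha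
    subst ha
    exact absurd haS hx
  | @cons a b c h p' ih =>
    intro hx w hw hwS
    by_cases hbS : b ∈ S
    · refine ⟨b, Walk.cons h Walk.nil, p', hbS, by simp, ?_⟩
      intro v hv hvS
      simp only [support_cons, support_nil, List.mem_cons, List.mem_singleton] at hv
      rcases hv with rfl | rfl | h'
      · exact absurd hvS hx
      · rfl
      · simp at h'
    · have hw' : w ∈ p'.support := by
        rw [support_cons, List.mem_cons] at hw
        rcases hw with rfl | hw
        · exact absurd hwS hx
        · exact hw
      obtain ⟨b', q, r, hb', hqr, hmin⟩ := ih hbS w hw' hwS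
      refine ⟨b', Walk.cons h q, r, hb', by rw [cons_append, ← hqr], ?_⟩
      intro v hv hvS
      rw [support_cons, List.mem_cons] at hv
      rcases hv with rfl | hv
      · exact absurd hvS hx
      · exact hmin v hv hvS

lemma no_cycle [Fintype V] {G : SimpleGraph V} {H : G.Subgraph}
    (hH : Maximal23Subgraph H) {F : Set V}
    (hBranch : ∀ v : V, subDeg H v = 3 → v ∈ F)
    (hLink : ∀ v : V, subDeg H v = 2 →
      (∃ (u : V) (c : G.Walk u u), c.IsCycle ∧ {x | x ∈ c.support} ∩ H.verts = {v}) →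
      v ∈ F)
    (hIso : ∀ (u : V) (c : G.Walk u u), c.IsCycle →
      (∀ x ∈ c.support, x ∈ H.verts ∧ subDeg H x = 2) → ∃ x ∈ c.support, x ∈ F)
    {u : V} (c : G.Walk u u) (hc : c.IsCycle) (hF : ∀ x ∈ c.support, x ∉ F) : False := by
  classical
  obtain ⟨h23, hmax⟩ := hH
  have hdeg2 : ∀ x ∈ c.support, x ∈ H.verts → subDeg H x = 2 := by
    intro x hx hxS
    rcases h23 x hxS with h | h
    · exact h
    · exact absurd (hBranch x h) (hF x hx)
  by_cases hall : ∀ x ∈ c.support, x ∈ H.verts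
  · obtain ⟨x, hx, hxF⟩ := hIso u c hc (fun x hx => ⟨hall x hx, hdeg2 x hx (hall x hx)⟩)
    exact hF x hx hxF
  push_neg at hall
  obtain ⟨w, hw, hwS⟩ := hall
  by_cases hnone : ∀ x ∈ c.support, x ∉ H.verts
  · have h23' : Is23Subgraph (H ⊔ c.toSubgraph) := by
      intro v hv
      by_cases hvc : v ∈ c.support
      · left
        have h1 : H.neighborSet v = ∅ := by
          ext zz
          simp only [Set.mem_empty_iff_false, iff_false, Subgraph.mem_neighborSet]
          exact fun hadj => hnone v hvc hadj.fst_mem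
        simp only [subDeg, Subgraph.neighborSet_sup, h1, Set.empty_union]
        exact cycle_nbr c hc hvc
      · have h2 := nbr_empty c hvc
        have hvH : v ∈ H.verts := by
          rw [Subgraph.verts_sup, Set.mem_union] at hv
          rcases hv with hv | hv
          · exact hv
          · exact absurd ((c.mem_verts_toSubgraph).mp hv) hvc
        have := h23 v hvH
        simpa only [subDeg, Subgraph.neighborSet_sup, h2, Set.union_empty] using this
    have heq := hmax _ h23' le_sup_left
    have hu : u ∈ (H ⊔ c.toSubgraph).verts := by
      rw [Subgraph.verts_sup]
      exact Or.inr c.start_mem_verts_toSubgraph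
    rw [heq] at hu
    exact hnone u c.start_mem_support hu
  push_neg at hnone
  obtain ⟨a, ha, haS⟩ := hnone
  set d := c.rotate w hw with hd_def
  have hd : d.IsCycle := hc.rotate hw
  have hmemd : ∀ x, x ∈ d.support ↔ x ∈ c.support := by
    intro x
    rw [mem_closed_iff d hd.not_nil, mem_closed_iff c hc.not_nil]
    exact (Walk.support_rotate c w hw).mem_iff
  obtain ⟨b, q, r, hbS, hqr, hqmin⟩ := extract H.verts d hwS a ((hmemd a).mpr ha) haS
  have hbw : b ≠ w := fun h => hwS (h ▸ hbS)
  obtain ⟨b', q', r', hb'S, hqr', hq'min⟩ :=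
    extract H.verts r.reverse hwS b r.reverse.end_mem_support hbS
  have hb'w : b' ≠ w := fun h => hwS (h ▸ hb'S)
  have hsup : d.support = q.support ++ r.support.tail := by rw [hqr, Walk.support_append]
  have htail : d.support.tail = q.support.tail ++ r.support.tail := by
    have h2 : w :: d.support.tail = (w :: q.support.tail) ++ r.support.tail := by
      rw [← q.support_eq_cons, ← d.support_eq_cons]; exact hsup
    rw [List.cons_append] at h2
    exact (List.cons.injEq _ _ _ _).mp h2 |>.2
  have hTnd : (q.support.tail ++ r.support.tail).Nodup := htail ▸ hd.support_nodup
  rw [List.nodup_append] at hTnd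
  obtain ⟨hqt, hrt, hdisj⟩ := hTnd
  have hbq : b ∈ q.support := q.end_mem_support
  have hbqt : b ∈ q.support.tail := by
    have := hbq
    rw [q.support_eq_cons, List.mem_cons] at this
    exact this.resolve_left hbw
  have hwr : w ∈ r.support.tail := by
    have := r.end_mem_support
    rw [r.support_eq_cons, List.mem_cons] at this
    exact this.resolve_left (fun h => hbw h.symm)
  have hwq : w ∉ q.support.tail := fun h => hdisj _ h _ hwr rfl
  have hqnd : q.support.Nodup := by
    rw [q.support_eq_cons, List.nodup_cons]; exact ⟨hwq, hqt⟩
  have hbrt : b ∉ r.support.tail := fun h => hdisj _ hbqt _ h rfl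
  have hrnd : r.support.Nodup := by
    rw [r.support_eq_cons, List.nodup_cons]; exact ⟨hbrt, hrt⟩
  have hrrnd : r.reverse.support.Nodup := by
    rw [Walk.support_reverse]; exact List.nodup_reverse.mpr hrnd
  have hrsup : r.reverse.support = q'.support ++ r'.support.tail := by
    rw [hqr', Walk.support_append]
  have hq'r'nd := hrrnd
  rw [hrsup, List.nodup_append] at hq'r'nd
  obtain ⟨hq'nd, hr't, hdisj'⟩ := hq'r'nd
  have hbc : b ∈ c.support := (hmemd b).mp (by rw [hsup]; exact List.mem_append_left _ hbq)
  by_cases hbb' : b' = b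
  · subst hbb'
    have hr'nil : r'.Nil := by
      by_contra hr'nn
      exact hdisj' _ q'.end_mem_support _ (end_mem_tail r' hr'nn) rfl
    have hr'tail : r'.support.tail = [] := by
      have hlen0 : r'.length = 0 := (Walk.nil_iff_length_eq).mp hr'nil
      apply List.eq_nil_of_length_eq_zero
      rw [List.length_tail, Walk.length_support, hlen0]
    have hallb : ∀ x ∈ d.support, x ∈ H.verts → x = b' := by
      intro x hx hxS
      rw [hsup, List.mem_append] at hx
      rcases hx with hx | hx
      · exact hqmin x hx hxS
      · have hxr : x ∈ r.reverse.support := by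
          rw [Walk.support_reverse, List.mem_reverse]
          exact List.mem_of_mem_tail hx
        rw [hrsup, hr'tail, List.append_nil] at hxr
        exact hq'min x hxr hxS
    have hsingle : {x | x ∈ c.support} ∩ H.verts = {b'} := by
      ext x
      simp only [Set.mem_inter_iff, Set.mem_setOf_eq, Set.mem_singleton_iff]
      constructor
      · rintro ⟨hxc, hxS⟩
        exact hallb x ((hmemd x).mpr hxc) hxS
      · rintro rfl
        exact ⟨hbc, hbS⟩
    exact hF b' hbc (hLink b' (hdeg2 b' hbc hbS) ⟨u, c, hc, hsingle⟩)
  · have hbnq' : b ∉ q'.support := fun h => hbb' (hq'min b h hbS).symm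
    set seg := q.reverse.append q' with hseg_def
    have hsegsup : seg.support = q.support.reverse ++ q'.support.tail := by
      rw [hseg_def, Walk.support_append, Walk.support_reverse]
    have hwq't : w ∉ q'.support.tail := by
      have := hq'nd
      rw [q'.support_eq_cons, List.nodup_cons] at this
      exact this.1
    have hsegnd : seg.support.Nodup := by
      rw [hsegsup, List.nodup_append]
      refine ⟨List.nodup_reverse.mpr hqnd, ?_, ?_⟩
      · have := hq'nd; rw [q'.support_eq_cons, List.nodup_cons] at this; exact this.2
      · intro v hv v'' hv' hvv; subst hvv
        rw [List.mem_reverse] at hv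
        have hvw : v ≠ w := fun h => hwq't (h ▸ hv')
        have hvq : v ∈ q.support.tail := by
          have h3 := hv; rw [q.support_eq_cons, List.mem_cons] at h3
          exact h3.resolve_left hvw
        have hvq' : v ∈ q'.support := List.mem_of_mem_tail hv'
        have hvr : v ∈ r.support := by
          have h4 : v ∈ r.reverse.support := by
            rw [hrsup]; exact List.mem_append_left _ hvq'
          rw [Walk.support_reverse, List.mem_reverse] at h4
          exact h4
        have hvb : v ≠ b := fun h => hbnq' (h ▸ hvq')
        have hvrt : v ∈ r.support.tail := by
          have h5 := hvr; rw [r.support_eq_cons, List.mem_cons] at h5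
          exact h5.resolve_left hvb
        exact hdisj _ hvq _ hvrt rfl
    have hqlen : 1 ≤ q.length := by
      by_contra hzero
      push_neg at hzero
      have h0 : q.length = 0 := by omega
      exact hbw (nil_endpoints q ((Walk.nil_iff_length_eq).mpr h0)).symm
    have hq'len : 1 ≤ q'.length := by
      by_contra hzero
      push_neg at hzero
      have h0 : q'.length = 0 := by omega
      exact hb'w (nil_endpoints q' ((Walk.nil_iff_length_eq).mpr h0)).symm
    have hseglen : 2 ≤ seg.length := by
      rw [hseg_def, Walk.length_append, Walk.length_reverse]; omega
    have hinterior : ∀ v ∈ seg.support, v ≠ b → v ≠ b' → v ∉ H.verts := by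
      intro v hv hvb hvb' hvS
      rw [hsegsup, List.mem_append] at hv
      rcases hv with hv | hv
      · rw [List.mem_reverse] at hv
        exact hvb (hqmin v hv hvS)
      · exact hvb' (hq'min v (List.mem_of_mem_tail hv) hvS)
    have hwseg : w ∈ seg.support := by
      rw [hsegsup, List.mem_append]
      left; rw [List.mem_reverse]; exact q.start_mem_support
    have hb'c : b' ∈ c.support := by
      apply (hmemd b').mp
      have h1 : b' ∈ r.support := by
        have h2 : b' ∈ r.reverse.support := by
          rw [hrsup]; exact List.mem_append_left _ q'.end_mem_support
        rw [Walk.support_reverse, List.mem_reverse] at h2; exact h2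
      have h2 : b' ∈ r.support.tail := by
        have h3 := h1; rw [r.support_eq_cons, List.mem_cons] at h3
        exact h3.resolve_left hbb'
      rw [hsup]; exact List.mem_append_right _ h2
    obtain ⟨z, hzmem, hzb, hzb', hznb⟩ := nbr_start seg hsegnd hseglen
    have hrevnd : seg.reverse.support.Nodup := by
      rw [Walk.support_reverse]; exact List.nodup_reverse.mpr hsegnd
    have hrevlen : 2 ≤ seg.reverse.length := by rw [Walk.length_reverse]; exact hseglen
    obtain ⟨z', hz'mem, hz'b', hz'b, hz'nb⟩ := nbr_start seg.reverse hrevnd hrevlen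
    rw [Walk.toSubgraph_reverse] at hz'nb
    have hz'seg : z' ∈ seg.support := by
      rw [Walk.support_reverse, List.mem_reverse] at hz'mem; exact hz'mem
    have hzS : z ∉ H.verts := hinterior z hzmem hzb hzb'
    have hz'S : z' ∉ H.verts := hinterior z' hz'seg hz'b hz'b'
    have h23' : Is23Subgraph (H ⊔ seg.toSubgraph) := by
      intro v hv
      by_cases hvseg : v ∈ seg.support
      · by_cases hvb : v = b
        · subst hvb
          right
          have hz_not : z ∉ H.neighborSet v := fun h => hzS (H.neighborSet_subset_verts v h)
          have hH2 : (H.neighborSet v).ncard = 2 := hdeg2 v hbc hbS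
          simp only [subDeg, Subgraph.neighborSet_sup, hznb, Set.union_singleton]
          rw [Set.ncard_insert_of_notMem hz_not (Set.toFinite _), hH2]
        · by_cases hvb' : v = b'
          · subst hvb'
            right
            have hz'_not : z' ∉ H.neighborSet v := fun h => hz'S (H.neighborSet_subset_verts v h)
            have hH2 : (H.neighborSet v).ncard = 2 := hdeg2 v hb'c hb'S
            simp only [subDeg, Subgraph.neighborSet_sup, hz'nb, Set.union_singleton]
            rw [Set.ncard_insert_of_notMem hz'_not (Set.toFinite _), hH2]
          · left
            have hvS : v ∉ H.verts := hinterior v hvseg hvb hvb'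
            have h1 : H.neighborSet v = ∅ := by
              ext zz
              simp only [Set.mem_empty_iff_false, iff_false, Subgraph.mem_neighborSet]
              exact fun hadj => hvS hadj.fst_mem
            simp only [subDeg, Subgraph.neighborSet_sup, h1, Set.empty_union]
            exact nbr_internal v seg hsegnd hvseg hvb hvb'
      · have h2 := nbr_empty seg hvseg
        have hvH : v ∈ H.verts := by
          rw [Subgraph.verts_sup, Set.mem_union] at hv
          rcases hv with hv | hv
          · exact hv
          · exact absurd ((seg.mem_verts_toSubgraph).mp hv) hvseg
        have := h23 v hvH
        simpa only [subDeg, Subgraph.neighborSet_sup, h2, Set.union_empty] using this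
    have heq := hmax _ h23' le_sup_left
    have hwmem : w ∈ (H ⊔ seg.toSubgraph).verts := by
      rw [Subgraph.verts_sup]
      exact Or.inr ((seg.mem_verts_toSubgraph).mpr hwseg)
    rw [heq] at hwmem
    exact hwS hwmem

end Sub23Aux

/-- Let `H` be a maximal 2-3-subgraph of a finite graph `G` and let `F` contain every
branchpoint of `H`, every linkpoint of `H`, and at least one vertex of every isolated
cycle of `H`. Then `F` is a feedback vertex set of `G`. -/
theorem sub23_gives_fvs [Fintype V] {G : SimpleGraph V} (H : G.Subgraph)
    (hH : Maximal23Subgraph H) (F : Set V)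
    (hBranch : ∀ v : V, subDeg H v = 3 → v ∈ F)
    (hLink : ∀ v : V, subDeg H v = 2 →
      (∃ (u : V) (c : G.Walk u u), c.IsCycle ∧ {x | x ∈ c.support} ∩ H.verts = {v}) →
      v ∈ F)
    (hIso : ∀ (u : V) (c : G.Walk u u), c.IsCycle →
      (∀ x ∈ c.support, x ∈ H.verts ∧ subDeg H x = 2) → ∃ x ∈ c.support, x ∈ F) :
    (G.induce Fᶜ).IsAcyclic := by
  intro v0 c0 hc0
  have hinj : Function.Injective (Embedding.induce Fᶜ : G.induce Fᶜ ↪g G) :=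
    (Embedding.induce Fᶜ).injective
  have hc : (c0.map (Embedding.induce Fᶜ : G.induce Fᶜ ↪g G).toHom).IsCycle :=
    (Walk.map_isCycle_iff_of_injective hinj).mpr hc0
  refine Sub23Aux.no_cycle hH hBranch hLink hIso _ hc ?_
  intro x hx
  rw [Walk.support_map, List.mem_map] at hx
  obtain ⟨y, hy, rfl⟩ := hx
  exact y.2
end

section
/- Let c ≥ 1 and α ≥ 0 be real numbers. Suppose there is a deterministic delayed-decision algorithm for online Feedback Vertex Set whose output satisfies |S_n(G)| ≤ c·μ(G) on every instance (n, G). Then there is a deterministic delayed-decision algorithm with reservations for online Feedback Vertex Set whose cost with reservation cost α is at most min{c, 1 + cα}·μ(G) on every instance (n, G). -/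
open SimpleGraph

/-- `S` is a feedback vertex set of `G`: removing `S` leaves an acyclic induced subgraph. -/
def IsFVS {n : ℕ} (G : SimpleGraph (Fin n)) (S : Finset (Fin n)) : Prop :=
  (G.induce {v : Fin n | v ∉ S}).IsAcyclic

/-- `fvsNum G` is the minimum size of a feedback vertex set of `G`. -/
noncomputable def fvsNum {n : ℕ} (G : SimpleGraph (Fin n)) : ℕ :=
  sInf {k : ℕ | ∃ S : Finset (Fin n), IsFVS G S ∧ S.card = k}

/-- A deterministic delayed-decision algorithm for online Feedback Vertex Set.
Vertices of an instance `(n, G)` arrive in the order `0, 1, …, n-1`; after the `i`-th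
arrival the algorithm has irrevocably selected the set `S n G i ⊆ {0, …, i-1}`. -/
structure DelayedFVSAlgorithm where
  /-- the set selected after seeing the first `i` vertices -/
  S : ∀ n : ℕ, SimpleGraph (Fin n) → ℕ → Finset (Fin n)
  /-- only already presented vertices may be selected -/
  mem_lt : ∀ (n : ℕ) (G : SimpleGraph (Fin n)) (i : ℕ) (v : Fin n),
    v ∈ S n G i → (v : ℕ) < i
  /-- determinism/online condition: on instances agreeing on their `i`-th prefix, the
  selected sets agree -/
  online : ∀ (n m : ℕ) (G : SimpleGraph (Fin n)) (G' : SimpleGraph (Fin m)) (i : ℕ)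
      (hn : i ≤ n) (hm : i ≤ m),
      (∀ x y : Fin i, G.Adj (Fin.castLE hn x) (Fin.castLE hn y) ↔
        G'.Adj (Fin.castLE hm x) (Fin.castLE hm y)) →
      (S n G i).image Fin.val = (S m G' i).image Fin.val
  /-- decisions are irrevocable -/
  irrevocable : ∀ (n : ℕ) (G : SimpleGraph (Fin n)) (i : ℕ), i < n →
    S n G i ⊆ S n G (i + 1)
  /-- a valid partial solution is maintained: the subgraph induced on the presented,
  non-selected vertices is acyclic -/
  valid : ∀ (n : ℕ) (G : SimpleGraph (Fin n)) (i : ℕ), i ≤ n →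
    (G.induce {v : Fin n | (v : ℕ) < i ∧ v ∉ S n G i}).IsAcyclic

/-- A deterministic delayed-decision algorithm with reservations for online
Feedback Vertex Set: besides the irrevocably selected set `S`, the algorithm may
reserve a set `R` of vertices. -/
structure DelayedFVSAlgorithmRes where
  /-- the set of irrevocably selected vertices after seeing the first `i` vertices -/
  S : ∀ n : ℕ, SimpleGraph (Fin n) → ℕ → Finset (Fin n)
  /-- the set of reserved vertices after seeing the first `i` vertices -/
  R : ∀ n : ℕ, SimpleGraph (Fin n) → ℕ → Finset (Fin n)
  memS_lt : ∀ (n : ℕ) (G : SimpleGraph (Fin n)) (i : ℕ) (v : Fin n),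
    v ∈ S n G i → (v : ℕ) < i
  memR_lt : ∀ (n : ℕ) (G : SimpleGraph (Fin n)) (i : ℕ) (v : Fin n),
    v ∈ R n G i → (v : ℕ) < i
  /-- determinism/online condition -/
  online : ∀ (n m : ℕ) (G : SimpleGraph (Fin n)) (G' : SimpleGraph (Fin m)) (i : ℕ)
      (hn : i ≤ n) (hm : i ≤ m),
      (∀ x y : Fin i, G.Adj (Fin.castLE hn x) (Fin.castLE hn y) ↔
        G'.Adj (Fin.castLE hm x) (Fin.castLE hm y)) →
      (S n G i).image Fin.val = (S m G' i).image Fin.val ∧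
      (R n G i).image Fin.val = (R m G' i).image Fin.val
  irrevocableS : ∀ (n : ℕ) (G : SimpleGraph (Fin n)) (i : ℕ), i < n →
    S n G i ⊆ S n G (i + 1)
  irrevocableR : ∀ (n : ℕ) (G : SimpleGraph (Fin n)) (i : ℕ), i < n →
    R n G i ⊆ R n G (i + 1)
  /-- the selected vertices together with the reserved ones form a valid partial
  solution: the subgraph induced on the remaining presented vertices is acyclic -/
  valid : ∀ (n : ℕ) (G : SimpleGraph (Fin n)) (i : ℕ), i ≤ n →
    (G.induce {v : Fin n | (v : ℕ) < i ∧ v ∉ S n G i ∪ R n G i}).IsAcyclic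

/-- The cost of an algorithm with reservations on the instance `(n, G)` with
reservation cost `α`: the irrevocably selected vertices, plus the minimum number of
further vertices needed to complete them to a feedback vertex set, plus `α` per
reserved vertex. -/
noncomputable def resCost (A : DelayedFVSAlgorithmRes) (α : ℝ) (n : ℕ)
    (G : SimpleGraph (Fin n)) : ℝ :=
  ((A.S n G n).card : ℝ) +
    ((sInf {k : ℕ | ∃ T : Finset (Fin n), IsFVS G (A.S n G n ∪ T) ∧ T.card = k} : ℕ) : ℝ) +
    α * ((A.R n G n).card : ℝ)

/-- The algorithm with reservations that selects exactly what `A` selects and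
reserves nothing. -/
def toResS (A : DelayedFVSAlgorithm) : DelayedFVSAlgorithmRes where
  S := A.S
  R _ _ _ := ∅
  memS_lt := A.mem_lt
  memR_lt := by intro n G i v hv; exact absurd hv (Finset.notMem_empty v)
  online := by
    intro n m G G' i hn hm h
    exact ⟨A.online n m G G' i hn hm h, by simp⟩
  irrevocableS := A.irrevocable
  irrevocableR := by intro n G i _; exact Finset.Subset.refl _
  valid := by
    intro n G i hi
    have hset : {v : Fin n | (v : ℕ) < i ∧ v ∉ A.S n G i ∪ (∅ : Finset (Fin n))} =
        {v : Fin n | (v : ℕ) < i ∧ v ∉ A.S n G i} := by ext v; simp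
    rw [hset]; exact A.valid n G i hi

/-- The algorithm with reservations that reserves exactly what `A` selects and
irrevocably selects nothing. -/
def toResR (A : DelayedFVSAlgorithm) : DelayedFVSAlgorithmRes where
  S _ _ _ := ∅
  R := A.S
  memS_lt := by intro n G i v hv; exact absurd hv (Finset.notMem_empty v)
  memR_lt := A.mem_lt
  online := by
    intro n m G G' i hn hm h
    exact ⟨by simp, A.online n m G G' i hn hm h⟩
  irrevocableS := by intro n G i _; exact Finset.Subset.refl _
  irrevocableR := A.irrevocable
  valid := by
    intro n G i hi
    have hset : {v : Fin n | (v : ℕ) < i ∧ v ∉ (∅ : Finset (Fin n)) ∪ A.S n G i} =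
        {v : Fin n | (v : ℕ) < i ∧ v ∉ A.S n G i} := by ext v; simp
    rw [hset]; exact A.valid n G i hi

lemma isFVS_univ {n : ℕ} (G : SimpleGraph (Fin n)) : IsFVS G Finset.univ :=
  fun v _ _ => v.2 (Finset.mem_univ v.1)

lemma fvsNum_mem {n : ℕ} (G : SimpleGraph (Fin n)) :
    fvsNum G ∈ {k : ℕ | ∃ S : Finset (Fin n), IsFVS G S ∧ S.card = k} :=
  Nat.sInf_mem ⟨Finset.univ.card, Finset.univ, isFVS_univ G, rfl⟩

lemma final_isFVS (A : DelayedFVSAlgorithm) (n : ℕ) (G : SimpleGraph (Fin n)) :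
    IsFVS G (A.S n G n) := by
  have h := A.valid n G n le_rfl
  have hset : {v : Fin n | (v : ℕ) < n ∧ v ∉ A.S n G n} = {v | v ∉ A.S n G n} := by
    ext v; simp [v.isLt]
  rwa [hset] at h

/-- A `c`-competitive deterministic delayed-decision algorithm for online Feedback
Vertex Set yields a `min {c, 1 + cα}`-competitive deterministic delayed-decision
algorithm with reservations. -/
theorem fvs_reservation_upper_from_delayed (c α : ℝ) (hc : 1 ≤ c) (hα : 0 ≤ α)
    (A : DelayedFVSAlgorithm)
    (hA : ∀ (n : ℕ) (G : SimpleGraph (Fin n)),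
      ((A.S n G n).card : ℝ) ≤ c * (fvsNum G : ℝ)) :
    ∃ B : DelayedFVSAlgorithmRes, ∀ (n : ℕ) (G : SimpleGraph (Fin n)),
      resCost B α n G ≤ min c (1 + c * α) * (fvsNum G : ℝ) := by
  by_cases hmin : c ≤ 1 + c * α
  · refine ⟨toResS A, fun n G => ?_⟩
    have hS : IsFVS G (A.S n G n) := final_isFVS A n G
    have hInf : sInf {k : ℕ | ∃ T : Finset (Fin n),
        IsFVS G (A.S n G n ∪ T) ∧ T.card = k} = 0 :=
      Nat.sInf_eq_zero.mpr (Or.inl ⟨∅, by simpa using hS, Finset.card_empty⟩)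
    rw [min_eq_left hmin]
    simp only [resCost, toResS]
    rw [hInf]
    simpa using hA n G
  · refine ⟨toResR A, fun n G => ?_⟩
    push_neg at hmin
    have hInf : sInf {k : ℕ | ∃ T : Finset (Fin n),
        IsFVS G ((∅ : Finset (Fin n)) ∪ T) ∧ T.card = k} = fvsNum G := by
      have : {k : ℕ | ∃ T : Finset (Fin n), IsFVS G ((∅ : Finset (Fin n)) ∪ T) ∧ T.card = k}
          = {k : ℕ | ∃ S : Finset (Fin n), IsFVS G S ∧ S.card = k} := by
        simp [Finset.empty_union]
      rw [this]; rfl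
    rw [min_eq_right hmin.le]
    simp only [resCost, toResR]
    rw [hInf]
    simp only [Finset.card_empty, Nat.cast_zero, zero_add]
    have h1 : α * ((A.S n G n).card : ℝ) ≤ α * (c * (fvsNum G : ℝ)) :=
      mul_le_mul_of_nonneg_left (hA n G) hα
    have h2 : (0 : ℝ) ≤ (fvsNum G : ℝ) := Nat.cast_nonneg _
    nlinarith [h1, h2]
end

section
/- Let c ≥ 1 and α ≥ 0 be real numbers. Suppose that for every deterministic delayed-decision algorithm for online Feedback Vertex Set and every real ε > 0 there exists an instance (n, G) with μ(G) ≥ 1 and |S_n(G)| > (c − ε)·μ(G). Then for every deterministic delayed-decision algorithm with reservations for online Feedback Vertex Set and every real ε > 0 there exists an instance (n, G) with μ(G) ≥ 1 whose cost with reservation cost α exceeds (min{1 + (c − 1)α, c} − ε)·μ(G). -/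
open SimpleGraph

/-- A lower bound of `c` on the competitive ratio of delayed-decision algorithms for
online Feedback Vertex Set yields a lower bound of `min {1 + (c-1)α, c}` for
delayed-decision algorithms with reservations. -/
theorem fvs_reservation_lower_from_delayed (c α : ℝ) (hc : 1 ≤ c) (hα : 0 ≤ α)
    (h : ∀ (A : DelayedFVSAlgorithm) (ε : ℝ), 0 < ε →
      ∃ (n : ℕ) (G : SimpleGraph (Fin n)),
        1 ≤ fvsNum G ∧ ((A.S n G n).card : ℝ) > (c - ε) * (fvsNum G : ℝ)) :
    ∀ (B : DelayedFVSAlgorithmRes) (ε : ℝ), 0 < ε →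
      ∃ (n : ℕ) (G : SimpleGraph (Fin n)),
        1 ≤ fvsNum G ∧
          resCost B α n G > (min (1 + (c - 1) * α) c - ε) * (fvsNum G : ℝ) := by

  intro B ε hε
  -- Build a plain delayed algorithm that selects everything B selects or reserves.
  set A : DelayedFVSAlgorithm :=
    { S := fun n G i => B.S n G i ∪ B.R n G i
      mem_lt := by
        intro n G i v hv
        rcases Finset.mem_union.1 hv with h' | h'
        · exact B.memS_lt n G i v h'
        · exact B.memR_lt n G i v h'
      online := by
        intro n m G G' i hn hm hiso
        obtain ⟨hS, hR⟩ := B.online n m G G' i hn hm hiso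
        simp only [Finset.image_union, hS, hR]
      irrevocable := fun n G i hi =>
        Finset.union_subset_union (B.irrevocableS n G i hi) (B.irrevocableR n G i hi)
      valid := fun n G i hi => B.valid n G i hi } with hA
  obtain ⟨n, G, hμ, hcard⟩ := h A ε hε
  refine ⟨n, G, hμ, ?_⟩
  have hAS : A.S n G n = B.S n G n ∪ B.R n G n := rfl
  rw [hAS] at hcard
  set S := B.S n G n with hSdef
  set R := B.R n G n with hRdef
  have hm1 : (1 : ℝ) ≤ (fvsNum G : ℝ) := by exact_mod_cast hμ
  have hm0 : (0 : ℝ) ≤ (fvsNum G : ℝ) := by linarith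
  -- S ∪ R is a feedback vertex set
  have hSR : IsFVS G (S ∪ R) := by
    have hv := B.valid n G n le_rfl
    have hset : {v : Fin n | (v : ℕ) < n ∧ v ∉ B.S n G n ∪ B.R n G n}
        = {v : Fin n | v ∉ S ∪ R} := by
      ext v; simp [v.isLt, hSdef, hRdef]
    rwa [hset] at hv
  have hne : {k : ℕ | ∃ T : Finset (Fin n), IsFVS G (S ∪ T) ∧ T.card = k}.Nonempty :=
    ⟨R.card, R, hSR, rfl⟩
  obtain ⟨T₀, hT₀, hT₀card⟩ := Nat.sInf_mem hne
  have hμle : fvsNum G ≤ S.card +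
      sInf {k : ℕ | ∃ T : Finset (Fin n), IsFVS G (S ∪ T) ∧ T.card = k} := by
    calc fvsNum G ≤ (S ∪ T₀).card := Nat.sInf_le ⟨S ∪ T₀, hT₀, rfl⟩
      _ ≤ S.card + T₀.card := Finset.card_union_le _ _
      _ = _ := by rw [hT₀card]
  have hcard' : ((S ∪ R).card : ℝ) ≤ (S.card : ℝ) + (R.card : ℝ) := by
    exact_mod_cast Finset.card_union_le S R
  -- abbreviations
  set m : ℝ := (fvsNum G : ℝ) with hm
  set s : ℝ := (S.card : ℝ) with hs
  set r : ℝ := (R.card : ℝ) with hr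
  set t : ℝ := ((sInf {k : ℕ | ∃ T : Finset (Fin n), IsFVS G (S ∪ T) ∧ T.card = k} : ℕ) : ℝ)
    with ht
  have hsr : s + r > (c - ε) * m := by
    have := hcard
    push_cast at this ⊢
    linarith [hcard']
  have hst : m ≤ s + t := by rw [hm, hs, ht]; exact_mod_cast hμle
  have hs0 : (0 : ℝ) ≤ s := Nat.cast_nonneg _
  have hr0 : (0 : ℝ) ≤ r := Nat.cast_nonneg _
  have ht0 : (0 : ℝ) ≤ t := Nat.cast_nonneg _
  have hcost : resCost B α n G = s + t + α * r := rfl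
  rw [hcost]
  rcases le_total α 1 with hα1 | hα1
  · -- α ≤ 1 : use the bound 1 + (c-1)α
    have hmin : min (1 + (c - 1) * α) c ≤ 1 + (c - 1) * α := min_le_left _ _
    have hmle : (min (1 + (c - 1) * α) c - ε) * m ≤ (1 + (c - 1) * α - ε) * m :=
      mul_le_mul_of_nonneg_right (by linarith) hm0
    rcases eq_or_lt_of_le hα with hα0 | hα0
    · -- α = 0
      have : s + t + α * r ≥ m := by nlinarith [mul_nonneg hα hr0]
      have hεm : ε * m > 0 := mul_pos hε (by linarith)
      nlinarith
    · -- 0 < α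
      have h1 : α * ((c - ε) * m) < α * (s + r) := by
        exact (mul_lt_mul_iff_right₀ hα0).2 hsr
      have h2 : (1 - α) * m ≤ (1 - α) * (s + t) :=
        mul_le_mul_of_nonneg_left hst (by linarith)
      have h4 : 0 ≤ α * t := mul_nonneg (le_of_lt hα0) ht0
      have h5 : 0 ≤ (1 - α) * (ε * m) :=
        mul_nonneg (by linarith) (le_of_lt (mul_pos hε (by linarith)))
      nlinarith
  · -- 1 ≤ α : use the bound c
    have hmin : min (1 + (c - 1) * α) c ≤ c := min_le_right _ _
    have hmle : (min (1 + (c - 1) * α) c - ε) * m ≤ (c - ε) * m :=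
      mul_le_mul_of_nonneg_right (by linarith) hm0
    have hrα : r ≤ α * r := le_mul_of_one_le_left hr0 hα1
    linarith
end

section
/- For every real c, every deterministic classical online algorithm for Vertex Cover admits an instance (n, G) on which its output satisfies |S_n(G)| > c·τ(G). In other words, the classical online Vertex Cover problem admits no competitive algorithm. -/
open SimpleGraph

/-- `S` is a vertex cover of `G`: it contains at least one endpoint of every edge. -/
def IsVC {n : ℕ} (G : SimpleGraph (Fin n)) (S : Finset (Fin n)) : Prop :=
  ∀ ⦃x y : Fin n⦄, G.Adj x y → x ∈ S ∨ y ∈ S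

/-- `vcNum G` is the minimum size of a vertex cover of `G`. -/
noncomputable def vcNum {n : ℕ} (G : SimpleGraph (Fin n)) : ℕ :=
  sInf {k : ℕ | ∃ S : Finset (Fin n), IsVC G S ∧ S.card = k}

/-- A deterministic classical online algorithm for Vertex Cover: upon arrival of
vertex `i` the algorithm decides immediately and irrevocably whether to include it,
and the selected set always covers all presented edges. -/
structure ClassicalVCAlgorithm where
  /-- the set selected after seeing the first `i` vertices -/
  S : ∀ n : ℕ, SimpleGraph (Fin n) → ℕ → Finset (Fin n)
  mem_lt : ∀ (n : ℕ) (G : SimpleGraph (Fin n)) (i : ℕ) (v : Fin n),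
    v ∈ S n G i → (v : ℕ) < i
  /-- determinism/online condition -/
  online : ∀ (n m : ℕ) (G : SimpleGraph (Fin n)) (G' : SimpleGraph (Fin m)) (i : ℕ)
      (hn : i ≤ n) (hm : i ≤ m),
      (∀ x y : Fin i, G.Adj (Fin.castLE hn x) (Fin.castLE hn y) ↔
        G'.Adj (Fin.castLE hm x) (Fin.castLE hm y)) →
      (S n G i).image Fin.val = (S m G' i).image Fin.val
  /-- immediacy: only the newly arrived vertex may be added, and nothing is removed -/
  immediate : ∀ (n : ℕ) (G : SimpleGraph (Fin n)) (i : ℕ), i < n →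
    S n G i ⊆ S n G (i + 1) ∧
      ∀ v : Fin n, v ∈ S n G (i + 1) → v ∉ S n G i → (v : ℕ) = i
  /-- validity: the selected set is a vertex cover of the presented prefix -/
  valid : ∀ (n : ℕ) (G : SimpleGraph (Fin n)) (i : ℕ), i ≤ n →
    ∀ x y : Fin n, (x : ℕ) < i → (y : ℕ) < i → G.Adj x y →
      x ∈ S n G i ∨ y ∈ S n G i

lemma algo_mono (A : ClassicalVCAlgorithm) (n : ℕ) (G : SimpleGraph (Fin n))
    {i j : ℕ} (hij : i ≤ j) (hj : j ≤ n) : A.S n G i ⊆ A.S n G j := by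
  induction j with
  | zero => simp_all
  | succ k ih =>
    rcases Nat.lt_or_ge i (k+1) with h | h
    · exact (ih (Nat.lt_succ_iff.mp h) (le_trans (Nat.le_succ k) hj)).trans
        (A.immediate n G k (Nat.lt_of_lt_of_le (Nat.lt_succ_self k) hj)).1
    · have : i = k + 1 := le_antisymm hij h
      subst this; exact subset_rfl

/-- The classical online Vertex Cover problem admits no competitive algorithm. -/
theorem classical_online_vc_not_competitive (c : ℝ) (A : ClassicalVCAlgorithm) :
    ∃ (n : ℕ) (G : SimpleGraph (Fin n)),
      ((A.S n G n).card : ℝ) > c * (vcNum G : ℝ) := by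
  set k : ℕ := ⌈max c 0⌉₊ + 1 with hk
  have hkc : (k : ℝ) > max c 0 := by
    have := Nat.le_ceil (max c 0)
    push_cast [hk]; linarith
  set n : ℕ := k + 1 with hn
  have hn1 : 1 ≤ n := by omega
  by_cases hE : A.S n (⊥ : SimpleGraph (Fin n)) n = ∅
  · -- the algorithm selects nothing on the empty graph; use the star centered at 0
    refine ⟨n, ⟨fun x y => x ≠ y ∧ (x = 0 ∨ y = 0), ?_, ?_⟩, ?_⟩
    · constructor; intro x y ⟨h1, h2⟩; exact ⟨h1.symm, h2.symm⟩
    · constructor; intro x ⟨h1, _⟩; exact h1 rfl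
    set G : SimpleGraph (Fin n) :=
      ⟨fun x y => x ≠ y ∧ (x = 0 ∨ y = 0), by constructor; intro x y ⟨h1, h2⟩; exact ⟨h1.symm, h2.symm⟩,
        by constructor; intro x ⟨h1, _⟩; exact h1 rfl⟩ with hG
    -- step 1: S n G 1 is empty
    have h1 : A.S n G 1 = ∅ := by
      have himg := A.online n n G (⊥ : SimpleGraph (Fin n)) 1 hn1 hn1 (by
        intro x y
        have : x = y := Subsingleton.elim x y
        subst this
        simp)
      have hb : A.S n (⊥ : SimpleGraph (Fin n)) 1 = ∅ := by
        have := algo_mono A n (⊥ : SimpleGraph (Fin n)) hn1 le_rfl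
        rw [hE] at this
        exact Finset.subset_empty.mp this
      rw [hb] at himg
      simpa using Finset.image_eq_empty.mp himg
    -- vertex 0 is never selected
    have h0 : ∀ j, j ≤ n → (0 : Fin n) ∉ A.S n G j := by
      intro j
      induction j with
      | zero => intro _ h; exact absurd (A.mem_lt n G 0 0 h) (by simp)
      | succ m ih =>
        intro hjn h
        by_cases hm : (0 : Fin n) ∈ A.S n G m
        · exact ih (by omega) hm
        · have hmn : m < n := by omega
          have := (A.immediate n G m hmn).2 0 h hm
          simp at this
          subst this
          rw [h1] at h
          exact absurd h (Finset.notMem_empty _)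
    -- every nonzero vertex must be selected at the end
    have hsub : Finset.univ.erase (0 : Fin n) ⊆ A.S n G n := by
      intro v hv
      simp only [Finset.mem_erase] at hv
      have hadj : G.Adj 0 v := ⟨Ne.symm hv.1, Or.inl rfl⟩
      rcases A.valid n G n le_rfl 0 v ((0 : Fin n)).isLt v.isLt hadj with h | h
      · exact absurd h (h0 n le_rfl)
      · exact h
    have hcard : k ≤ (A.S n G n).card := by
      have := Finset.card_le_card hsub
      simpa [Finset.card_erase_of_mem, hn] using this
    -- vcNum ≤ 1
    have hvc : vcNum G ≤ 1 := by
      apply Nat.sInf_le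
      exact ⟨{0}, fun x y ⟨_, h2⟩ => by rcases h2 with h | h <;> simp [h], Finset.card_singleton _⟩
    have hvc0 : (0:ℝ) ≤ (vcNum G : ℝ) := Nat.cast_nonneg _
    have hvc1 : (vcNum G : ℝ) ≤ 1 := by exact_mod_cast hvc
    have : c * (vcNum G : ℝ) ≤ max c 0 := by
      rcases le_or_gt c 0 with h | h
      · nlinarith [le_max_right c 0]
      · nlinarith [le_max_left c 0]
    calc c * (vcNum G : ℝ) ≤ max c 0 := this
      _ < k := hkc
      _ ≤ (A.S n G n).card := by exact_mod_cast hcard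
  · -- the algorithm selects something on the empty graph
    refine ⟨n, ⊥, ?_⟩
    have hvc : vcNum (⊥ : SimpleGraph (Fin n)) = 0 := by
      apply Nat.sInf_eq_zero.mpr
      left
      exact ⟨∅, fun x y h => absurd h (by simp), rfl⟩
    have : 1 ≤ (A.S n (⊥ : SimpleGraph (Fin n)) n).card :=
      Finset.card_pos.mpr (Finset.nonempty_of_ne_empty hE)
    have h1 : (1:ℝ) ≤ ((A.S n (⊥ : SimpleGraph (Fin n)) n).card : ℝ) := by exact_mod_cast this
    rw [hvc]
    push_cast
    linarith
end

section
/- For every real c, every deterministic classical online algorithm for Feedback Vertex Set admits an instance (n, G) on which its output satisfies |S_n(G)| > c·μ(G). In other words, the classical online Feedback Vertex Set problem admits no competitive algorithm. -/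
open SimpleGraph

/-- A deterministic classical online algorithm for Feedback Vertex Set: upon arrival of
vertex `i` the algorithm decides immediately and irrevocably whether to include it, and
the presented subgraph induced on non-selected vertices is always acyclic. -/
structure ClassicalFVSAlgorithm where
  /-- the set selected after seeing the first `i` vertices -/
  S : ∀ n : ℕ, SimpleGraph (Fin n) → ℕ → Finset (Fin n)
  mem_lt : ∀ (n : ℕ) (G : SimpleGraph (Fin n)) (i : ℕ) (v : Fin n),
    v ∈ S n G i → (v : ℕ) < i
  /-- determinism/online condition -/
  online : ∀ (n m : ℕ) (G : SimpleGraph (Fin n)) (G' : SimpleGraph (Fin m)) (i : ℕ)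
      (hn : i ≤ n) (hm : i ≤ m),
      (∀ x y : Fin i, G.Adj (Fin.castLE hn x) (Fin.castLE hn y) ↔
        G'.Adj (Fin.castLE hm x) (Fin.castLE hm y)) →
      (S n G i).image Fin.val = (S m G' i).image Fin.val
  /-- immediacy: only the newly arrived vertex may be added, and nothing is removed -/
  immediate : ∀ (n : ℕ) (G : SimpleGraph (Fin n)) (i : ℕ), i < n →
    S n G i ⊆ S n G (i + 1) ∧
      ∀ v : Fin n, v ∈ S n G (i + 1) → v ∉ S n G i → (v : ℕ) = i
  /-- validity -/
  valid : ∀ (n : ℕ) (G : SimpleGraph (Fin n)) (i : ℕ), i ≤ n →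
    (G.induce {v : Fin n | (v : ℕ) < i ∧ v ∉ S n G i}).IsAcyclic

/-- The flower graph: center `0`, with `k` triangles `0, 2j+1, 2j+2`. -/
def flower (k : ℕ) : SimpleGraph (Fin (2 * k + 1)) :=
  SimpleGraph.fromRel (fun u v => (u : ℕ) = 0 ∨ ((u : ℕ) % 2 = 1 ∧ (v : ℕ) = (u : ℕ) + 1))

theorem flower_adj {k : ℕ} (u v : Fin (2 * k + 1)) :
    (flower k).Adj u v ↔ (u : ℕ) ≠ (v : ℕ) ∧
      (((u : ℕ) = 0 ∨ ((u : ℕ) % 2 = 1 ∧ (v : ℕ) = (u : ℕ) + 1)) ∨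
       ((v : ℕ) = 0 ∨ ((v : ℕ) % 2 = 1 ∧ (u : ℕ) = (v : ℕ) + 1))) := by
  rw [flower, fromRel_adj]
  simp [Fin.ne_iff_vne]

theorem acyclic_of_unique_nbr {V : Type*} {G : SimpleGraph V}
    (h : ∀ v a b : V, G.Adj v a → G.Adj v b → a = b) : G.IsAcyclic := by
  intro v c hc
  cases c with
  | nil => exact hc.ne_nil rfl
  | @cons _ b _ hadj q =>
    rw [Walk.cons_isCycle_iff] at hc
    obtain ⟨hq, he⟩ := hc
    obtain ⟨x, hx, r, hr⟩ := Walk.exists_eq_cons_of_ne hadj.ne q.reverse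
    have hmem : s(v, x) ∈ q.reverse.edges := by
      rw [hr, Walk.edges_cons]; exact List.mem_cons_self
    rw [Walk.edges_reverse, List.mem_reverse] at hmem
    have : x = b := h v x b hx hadj
    subst this
    exact he hmem

theorem flower_induce_acyclic (k : ℕ) (s : Set (Fin (2 * k + 1)))
    (hs : ∀ v ∈ s, (v : ℕ) ≠ 0) : ((flower k).induce s).IsAcyclic := by
  apply acyclic_of_unique_nbr
  rintro ⟨v, hv⟩ ⟨a, ha⟩ ⟨b, hb⟩ h1 h2
  simp only [comap_adj, Function.Embedding.coe_subtype] at h1 h2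
  rw [flower_adj] at h1 h2
  have := hs v hv; have := hs a ha; have := hs b hb
  have : (a : ℕ) = (b : ℕ) := by omega
  exact Subtype.ext (Fin.ext this)

/-- The classical online Feedback Vertex Set problem admits no competitive
algorithm. -/
theorem classical_online_fvs_not_competitive (c : ℝ) (A : ClassicalFVSAlgorithm) :
    ∃ (n : ℕ) (G : SimpleGraph (Fin n)),
      ((A.S n G n).card : ℝ) > c * (fvsNum G : ℝ) := by
  by_cases h1 : A.S 1 ⊥ 1 = ∅
  case neg =>
    -- the algorithm selects a vertex even on the edgeless one-vertex graph
    refine ⟨1, ⊥, ?_⟩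
    have hfvs : fvsNum (⊥ : SimpleGraph (Fin 1)) = 0 := by
      apply Nat.sInf_eq_zero.mpr
      refine Or.inl ⟨∅, ?_, rfl⟩
      have hbot : (⊥ : SimpleGraph (Fin 1)).induce {v : Fin 1 | v ∉ (∅ : Finset (Fin 1))}
          = ⊥ := by ext a b; simp
      rw [IsFVS, hbot]
      exact isAcyclic_bot
    rw [hfvs]
    have : 0 < (A.S 1 ⊥ 1).card := Finset.card_pos.mpr (Finset.nonempty_of_ne_empty h1)
    push_cast
    simpa using this
  case pos =>
    set k : ℕ := ⌈|c|⌉₊ + 1 with hk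
    set n : ℕ := 2 * k + 1 with hn
    have hn1 : (1 : ℕ) ≤ n := by omega
    refine ⟨n, flower k, ?_⟩
    set Sf : Finset (Fin n) := A.S n (flower k) n with hSf
    -- step 1: after seeing one vertex, nothing is selected
    have hS1 : A.S n (flower k) 1 = ∅ := by
      have hadj : ∀ x y : Fin 1,
          (flower k).Adj (Fin.castLE hn1 x) (Fin.castLE hn1 y) ↔
          (⊥ : SimpleGraph (Fin 1)).Adj (Fin.castLE (le_refl 1) x)
            (Fin.castLE (le_refl 1) y) := by
        intro x y
        have : x = y := Subsingleton.elim x y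
        subst this
        simp
      have himg := A.online n 1 (flower k) ⊥ 1 hn1 (le_refl 1) hadj
      rw [h1, Finset.image_empty, Finset.image_eq_empty] at himg
      exact himg
    -- the center vertex is never selected
    have h0 : ∀ j : ℕ, 1 + j ≤ n → (⟨0, by omega⟩ : Fin n) ∉ A.S n (flower k) (1 + j) := by
      intro j
      induction j with
      | zero => intro _; simp [hS1]
      | succ m ih =>
        intro hle hmem
        by_cases hm : (⟨0, by omega⟩ : Fin n) ∈ A.S n (flower k) (1 + m)
        · exact ih (by omega) hm
        · have := (A.immediate n (flower k) (1 + m) (by omega)).2 _ hmem hm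
          simp at this
          omega
    have hv0 : (⟨0, by omega⟩ : Fin n) ∉ Sf := by
      have := h0 (2 * k) (by omega)
      have heq : 1 + 2 * k = n := by omega
      rwa [heq] at this
    have hval := A.valid n (flower k) n le_rfl
    -- every petal contributes a selected vertex
    have hhit : ∀ j : ℕ, (hj : j < k) →
        (⟨2 * j + 1, by omega⟩ : Fin n) ∈ Sf ∨ (⟨2 * j + 2, by omega⟩ : Fin n) ∈ Sf := by
      intro j hj
      by_contra hcon
      push_neg at hcon
      obtain ⟨ha, hb⟩ := hcon
      set T : Set (Fin n) := {v : Fin n | (v : ℕ) < n ∧ v ∉ Sf} with hT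
      have hx0 : (⟨0, by omega⟩ : Fin n) ∈ T := ⟨by omega, hv0⟩
      have hx1 : (⟨2 * j + 1, by omega⟩ : Fin n) ∈ T := ⟨by simp; omega, ha⟩
      have hx2 : (⟨2 * j + 2, by omega⟩ : Fin n) ∈ T := ⟨by simp; omega, hb⟩
      set x0 : T := ⟨⟨0, by omega⟩, hx0⟩
      set x1 : T := ⟨⟨2 * j + 1, by omega⟩, hx1⟩
      set x2 : T := ⟨⟨2 * j + 2, by omega⟩, hx2⟩
      have ha01 : ((flower k).induce T).Adj x0 x1 := by
        simp only [comap_adj, Function.Embedding.coe_subtype]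
        rw [flower_adj]; simp [x0, x1, x2]
      have ha12 : ((flower k).induce T).Adj x1 x2 := by
        simp only [comap_adj, Function.Embedding.coe_subtype]
        rw [flower_adj]; simp [x0, x1, x2] <;> omega
      have ha20 : ((flower k).induce T).Adj x2 x0 := by
        simp only [comap_adj, Function.Embedding.coe_subtype]
        rw [flower_adj]; simp [x0, x1, x2]
      have hne01 : x0 ≠ x1 := by
        intro h; apply ha01.ne; exact h
      have hne12 : x1 ≠ x2 := ha12.ne
      have hne02 : x2 ≠ x0 := ha20.ne
      set w : ((flower k).induce T).Walk x0 x0 :=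
        Walk.cons ha01 (Walk.cons ha12 (Walk.cons ha20 Walk.nil)) with hw
      have hcyc : w.IsCycle := by
        rw [hw, Walk.cons_isCycle_iff]
        constructor
        · rw [Walk.isPath_def]
          simp [Walk.support_cons]
          exact ⟨⟨hne12, fun h => hne01 h.symm⟩, hne02⟩
        · simp only [Walk.edges_cons, Walk.edges_nil, List.mem_cons, List.not_mem_nil,
            or_false, Sym2.eq_iff, not_or]
          exact ⟨⟨fun h => hne01 h.1, fun h => hne02 h.1.symm⟩,
            ⟨fun h => hne02 h.1.symm, fun h => hne12 h.2⟩⟩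
      exact hval w hcyc
    -- hence at least k vertices are selected
    have hcard : k ≤ Sf.card := by
      classical
      set f : ℕ → Fin n := fun j =>
        if hj : j < k then
          (if (⟨2 * j + 1, by omega⟩ : Fin n) ∈ Sf then (⟨2 * j + 1, by omega⟩ : Fin n)
           else ⟨2 * j + 2, by omega⟩)
        else ⟨0, by omega⟩ with hf
      have hval' : ∀ j : ℕ, j < k → ((f j : ℕ) = 2 * j + 1 ∧ f j ∈ Sf) ∨
          ((f j : ℕ) = 2 * j + 2 ∧ f j ∈ Sf) := by
        intro j hj
        rw [hf]
        simp only [dif_pos hj]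
        by_cases hm : (⟨2 * j + 1, by omega⟩ : Fin n) ∈ Sf
        · left; rw [if_pos hm]; exact ⟨rfl, hm⟩
        · right; rw [if_neg hm]
          refine ⟨rfl, ?_⟩
          rcases hhit j hj with h | h
          · exact absurd h hm
          · exact h
      have := Finset.card_le_card_of_injOn f
        (fun j hj => ((hval' j (Finset.mem_range.mp hj)).elim And.right And.right))
        (fun j1 hj1 j2 hj2 heq => by
          rcases hval' j1 (Finset.mem_range.mp hj1) with ⟨e1, _⟩ | ⟨e1, _⟩ <;>
          rcases hval' j2 (Finset.mem_range.mp hj2) with ⟨e2, _⟩ | ⟨e2, _⟩ <;>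
          · rw [heq] at e1; omega)
      simpa using this
    -- the optimum is at most 1
    have hfvs : fvsNum (flower k) ≤ 1 := by
      apply Nat.sInf_le
      refine ⟨{⟨0, by omega⟩}, ?_, Finset.card_singleton _⟩
      apply flower_induce_acyclic
      intro v hv hv0'
      apply hv
      simp only [Finset.mem_singleton]
      exact Fin.ext hv0'
    -- conclude
    have hc1 : (fvsNum (flower k) : ℝ) ≤ 1 := by exact_mod_cast hfvs
    have hc2 : (0 : ℝ) ≤ (fvsNum (flower k) : ℝ) := Nat.cast_nonneg _
    have hc3 : c * (fvsNum (flower k) : ℝ) ≤ |c| := by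
      calc c * (fvsNum (flower k) : ℝ) ≤ |c| * (fvsNum (flower k) : ℝ) :=
            mul_le_mul_of_nonneg_right (le_abs_self c) hc2
        _ ≤ |c| * 1 := mul_le_mul_of_nonneg_left hc1 (abs_nonneg c)
        _ = |c| := mul_one _
    have hc4 : |c| ≤ (⌈|c|⌉₊ : ℝ) := Nat.le_ceil _
    have hc5 : (k : ℝ) ≤ (Sf.card : ℝ) := by exact_mod_cast hcard
    have hc6 : ((⌈|c|⌉₊ : ℝ) + 1 : ℝ) = (k : ℝ) := by rw [hk]; push_cast; ring
    linarith
end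

section
/- Let G be a finite simple graph and H a maximal 2-3-subgraph of G. Then every cycle of G contains at least one vertex of V(H). -/
open SimpleGraph

variable {V : Type*}

lemma neighborSet_toSubgraph_of_not_mem {G : SimpleGraph V} {a b v : V}
    (p : G.Walk a b) (hv : v ∉ p.support) : p.toSubgraph.neighborSet v = ∅ := by
  ext w
  simp only [Set.mem_empty_iff_false, iff_false, SimpleGraph.Subgraph.mem_neighborSet]
  intro h
  exact hv (p.mem_verts_toSubgraph.mp h.fst_mem)

lemma neighborSet_toSubgraph_start {G : SimpleGraph V} {a b : V}
    (p : G.Walk a b) (hp : p.IsPath) (hn : ¬ p.Nil) :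
    p.toSubgraph.neighborSet a = {p.getVert 1} := by
  cases p with
  | nil => simp at hn
  | @cons _ x _ h q =>
    have hq : a ∉ q.support := by
      have := hp.support_nodup
      simpa using (List.nodup_cons.mp (by simpa using this)).1
    have : (SimpleGraph.Walk.cons h q).toSubgraph.neighborSet a =
        (G.subgraphOfAdj h).neighborSet a ∪ q.toSubgraph.neighborSet a := by
      rw [SimpleGraph.Walk.toSubgraph, SimpleGraph.Subgraph.neighborSet_sup]
    rw [this, neighborSet_toSubgraph_of_not_mem q hq,
      SimpleGraph.neighborSet_fst_subgraphOfAdj]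
    simp

/-- In the subgraph of a cycle, the base vertex has exactly two neighbors. -/
lemma cycle_neighborSet_start {G : SimpleGraph V} {u : V}
    (c : G.Walk u u) (hc : c.IsCycle) :
    (c.toSubgraph.neighborSet u).ncard = 2 := by
  cases c with
  | nil => exact absurd rfl hc.ne_nil
  | @cons _ w _ h p =>
    obtain ⟨hp, he⟩ := (SimpleGraph.Walk.cons_isCycle_iff p h).mp hc
    have hpn : ¬ p.reverse.Nil := by
      rw [SimpleGraph.Walk.nil_iff_length_eq, SimpleGraph.Walk.length_reverse]
      intro hl
      exact h.ne (SimpleGraph.Walk.eq_of_length_eq_zero hl).symm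
    have hrev : p.toSubgraph.neighborSet u = {p.reverse.getVert 1} := by
      rw [← SimpleGraph.Walk.toSubgraph_reverse]
      exact neighborSet_toSubgraph_start p.reverse hp.reverse hpn
    have hxadj : p.toSubgraph.Adj u (p.reverse.getVert 1) := by
      have : p.reverse.getVert 1 ∈ p.toSubgraph.neighborSet u := by rw [hrev]; exact rfl
      exact this
    have hxw : w ≠ p.reverse.getVert 1 := by
      intro hwx
      apply he
      rw [← SimpleGraph.Walk.mem_edges_toSubgraph]
      have heq : s(u, w) = s(u, p.reverse.getVert 1) := congrArg (fun z => s(u, z)) hwx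
      rw [heq, SimpleGraph.Subgraph.mem_edgeSet]
      exact hxadj
    have : (SimpleGraph.Walk.cons h p).toSubgraph.neighborSet u =
        (G.subgraphOfAdj h).neighborSet u ∪ p.toSubgraph.neighborSet u := by
      rw [SimpleGraph.Walk.toSubgraph, SimpleGraph.Subgraph.neighborSet_sup]
    rw [this, SimpleGraph.neighborSet_fst_subgraphOfAdj, hrev]
    rw [Set.singleton_union]
    exact Set.ncard_pair hxw

/-- In the subgraph of a cycle, every support vertex has exactly two neighbors. -/
lemma cycle_neighborSet_mem {G : SimpleGraph V} {u v : V}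
    (c : G.Walk u u) (hc : c.IsCycle) (hv : v ∈ c.support) :
    (c.toSubgraph.neighborSet v).ncard = 2 := by
  classical
  have := cycle_neighborSet_start (c.rotate v hv) (hc.rotate hv)
  rwa [SimpleGraph.Walk.toSubgraph_rotate c hv] at this

/-- Every cycle of a finite graph `G` contains at least one vertex of any maximal
2-3-subgraph `H` of `G`. -/
theorem cycle_meets_maximal_sub23 [Fintype V] {G : SimpleGraph V} (H : G.Subgraph)
    (hH : Maximal23Subgraph H) (u : V) (c : G.Walk u u) (hc : c.IsCycle) :
    ∃ x ∈ c.support, x ∈ H.verts := by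
  by_contra hcon
  push_neg at hcon
  set H' : G.Subgraph := H ⊔ c.toSubgraph with hH'
  have hverts : H'.verts = H.verts ∪ c.toSubgraph.verts := rfl
  have h23 : Is23Subgraph H' := by
    intro v hv
    rcases hv with hv | hv
    · -- v ∈ H.verts, so v ∉ c.support
      have hvs : v ∉ c.support := fun hs => hcon v hs hv
      have : H'.neighborSet v = H.neighborSet v := by
        rw [hH', SimpleGraph.Subgraph.neighborSet_sup,
          neighborSet_toSubgraph_of_not_mem c hvs, Set.union_empty]
      unfold subDeg
      rw [this]
      exact hH.1 v hv
    · -- v ∈ c.support, so v ∉ H.verts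
      have hvs : v ∈ c.support := c.mem_verts_toSubgraph.mp hv
      have hvH : v ∉ H.verts := hcon v hvs
      have hHe : H.neighborSet v = ∅ := by
        ext w
        simp only [Set.mem_empty_iff_false, iff_false, SimpleGraph.Subgraph.mem_neighborSet]
        intro h
        exact hvH h.fst_mem
      have : H'.neighborSet v = c.toSubgraph.neighborSet v := by
        rw [hH', SimpleGraph.Subgraph.neighborSet_sup, hHe, Set.empty_union]
      left
      unfold subDeg
      rw [this]
      exact cycle_neighborSet_mem c hc hvs
  have heq := hH.2 H' h23 le_sup_left
  have hu : u ∈ H'.verts := Or.inr c.start_mem_verts_toSubgraph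
  rw [heq] at hu
  exact hcon u c.start_mem_support hu
end

section
/- Let G be a finite simple graph, H a maximal 2-3-subgraph of G, and C a cycle of G none of whose vertices is a branchpoint of H (i.e., no vertex of C has degree 3 in H). Then either V(C) ∩ V(H) consists of exactly one vertex, or V(C) ⊆ V(H). -/
open SimpleGraph

variable {V : Type*}

variable {G : SimpleGraph V}

lemma nbr_empty_of_not_mem_verts (H : G.Subgraph) {v : V} (hv : v ∉ H.verts) :
    H.neighborSet v = ∅ := by
  ext w
  simp only [Subgraph.mem_neighborSet, Set.mem_empty_iff_false, iff_false]
  exact fun h => hv h.fst_mem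

lemma nbr_subset_verts (H : G.Subgraph) (v : V) : H.neighborSet v ⊆ H.verts :=
  fun _ h => (Subgraph.mem_neighborSet _ _ _ |>.mp h).snd_mem

lemma toSubgraph_nbr_empty {x z v : V} (p : G.Walk x z) (hv : v ∉ p.support) :
    p.toSubgraph.neighborSet v = ∅ :=
  nbr_empty_of_not_mem_verts _ (fun h => hv ((Walk.mem_verts_toSubgraph p).mp h))

lemma nbr_start_path {x z : V} (p : G.Walk x z) (hp : p.IsPath) (hxz : x ≠ z) :
    (p.toSubgraph.neighborSet x).ncard = 1 := by
  cases p with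
  | nil => exact absurd rfl hxz
  | cons h q =>
    rw [Walk.cons_isPath_iff] at hp
    show ((G.subgraphOfAdj h ⊔ q.toSubgraph).neighborSet x).ncard = 1
    rw [Subgraph.neighborSet_sup, toSubgraph_nbr_empty q hp.2, Set.union_empty,
      neighborSet_fst_subgraphOfAdj, Set.ncard_singleton]

lemma nbr_end_path {x z : V} (p : G.Walk x z) (hp : p.IsPath) (hxz : x ≠ z) :
    (p.toSubgraph.neighborSet z).ncard = 1 := by
  have := nbr_start_path p.reverse hp.reverse hxz.symm
  rwa [Walk.toSubgraph_reverse] at this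

lemma nbr_mid_path {x z : V} (p : G.Walk x z) (hp : p.IsPath) (v : V)
    (hv : v ∈ p.support) (hvx : v ≠ x) (hvz : v ≠ z) :
    (p.toSubgraph.neighborSet v).ncard = 2 := by
  induction p with
  | nil => simp at hv; exact absurd hv hvx
  | @cons a b c h q ih =>
    rw [Walk.cons_isPath_iff] at hp
    rw [Walk.support_cons, List.mem_cons] at hv
    rcases hv with hv | hv
    · exact absurd hv hvx
    show ((G.subgraphOfAdj h ⊔ q.toSubgraph).neighborSet v).ncard = 2
    rw [Subgraph.neighborSet_sup]
    by_cases hvb : v = b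
    · subst hvb
      rw [neighborSet_snd_subgraphOfAdj]
      obtain ⟨s, hs⟩ := Set.ncard_eq_one.mp (nbr_start_path q hp.1 hvz)
      rw [hs]
      have hsmem : s ∈ q.toSubgraph.neighborSet v := by rw [hs]; exact Set.mem_singleton s
      have hsx : a ≠ s := by
        intro h'
        subst h'
        exact hp.2 ((Walk.mem_verts_toSubgraph q).mp (nbr_subset_verts _ _ hsmem))
      rw [Set.singleton_union, Set.ncard_pair hsx]
    · rw [neighborSet_subgraphOfAdj_of_ne_of_ne h hvx hvb, Set.empty_union]
      exact ih hp.1 hv hvb hvz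

lemma nbr_cycle {u : V} (c : G.Walk u u) (hc : c.IsCycle) (v : V) (hv : v ∈ c.support) :
    (c.toSubgraph.neighborSet v).ncard = 2 := by
  classical
  have key : ∀ (w : V) (d : G.Walk w w), d.IsCycle →
      (d.toSubgraph.neighborSet w).ncard = 2 := by
    intro w d hd
    cases d with
    | nil => exact absurd rfl hd.ne_nil
    | @cons _ b _ h q =>
      rw [Walk.cons_isCycle_iff] at hd
      show ((G.subgraphOfAdj h ⊔ q.toSubgraph).neighborSet w).ncard = 2
      rw [Subgraph.neighborSet_sup, neighborSet_fst_subgraphOfAdj]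
      have hwb : w ≠ b := h.ne
      obtain ⟨s, hs⟩ := Set.ncard_eq_one.mp (nbr_end_path q hd.1 hwb.symm)
      rw [hs]
      have hbs : b ≠ s := by
        intro h'
        subst h'
        have hmem : b ∈ q.toSubgraph.neighborSet w := by rw [hs]; exact Set.mem_singleton b
        have : q.toSubgraph.Adj w b := hmem
        rw [← Subgraph.mem_edgeSet, Walk.mem_edges_toSubgraph] at this
        exact hd.2 this
      rw [Set.singleton_union, Set.ncard_insert_of_notMem (by simpa using hbs)
        (Set.toFinite _), Set.ncard_singleton]
  have hrot := key v (c.rotate v hv) (hc.rotate hv)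
  rwa [Walk.toSubgraph_rotate c hv] at hrot

lemma exists_prefix_until {S : Set V} {x z : V} (w : G.Walk x z) (hz : z ∈ S) :
    ∃ (t : V) (p : G.Walk x t) (r : G.Walk t z), t ∈ S ∧ w = p.append r ∧
      ∀ v ∈ p.support, v ≠ t → v ∉ S := by
  induction w with
  | @nil w => exact ⟨w, Walk.nil, Walk.nil, hz, rfl, by simp⟩
  | @cons a b c h q ih =>
    by_cases hx : a ∈ S
    · refine ⟨a, Walk.nil, Walk.cons h q, hx, rfl, ?_⟩
      intro v hv hne
      simp only [Walk.support_nil, List.mem_singleton] at hv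
      exact absurd hv hne
    · obtain ⟨t, p, r, ht, heq, hprop⟩ := ih hz
      refine ⟨t, Walk.cons h p, r, ht, by rw [Walk.cons_append, heq], ?_⟩
      intro v hv hne
      rw [Walk.support_cons, List.mem_cons] at hv
      rcases hv with rfl | hv
      · exact hx
      · exact hprop v hv hne

lemma mem_support_tail_of_closed {w : V} (d : G.Walk w w) (hne : d ≠ Walk.nil) (x : V)
    (hx : x ∈ d.support) : x ∈ d.support.tail := by
  rw [Walk.mem_support_iff] at hx
  rcases hx with rfl | h
  · cases d with
    | nil => exact absurd rfl hne
    | cons h q => simpa using q.end_mem_support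
  · exact h

lemma cycleExt [Fintype V] (H : G.Subgraph) (hH : Maximal23Subgraph H) {u : V}
    (c : G.Walk u u) (hc : c.IsCycle) (hdisj : ∀ x ∈ c.support, x ∉ H.verts) : False := by
  have h23 : Is23Subgraph (H ⊔ c.toSubgraph) := by
    intro v hv
    rw [Subgraph.verts_sup, Set.mem_union] at hv
    show ((H ⊔ c.toSubgraph).neighborSet v).ncard = 2 ∨
      ((H ⊔ c.toSubgraph).neighborSet v).ncard = 3
    rw [Subgraph.neighborSet_sup]
    by_cases hvs : v ∈ c.support
    · have hvH : v ∉ H.verts := hdisj v hvs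
      rw [nbr_empty_of_not_mem_verts H hvH, Set.empty_union]
      exact Or.inl (nbr_cycle c hc v hvs)
    · have hvH : v ∈ H.verts :=
        hv.resolve_right (fun h => hvs ((Walk.mem_verts_toSubgraph c).mp h))
      rw [toSubgraph_nbr_empty c hvs, Set.union_empty]
      exact hH.1 v hvH
  have heq := hH.2 _ h23 le_sup_left
  have hu : u ∈ (H ⊔ c.toSubgraph).verts := by
    rw [Subgraph.verts_sup]
    exact Or.inr ((Walk.mem_verts_toSubgraph c).mpr c.start_mem_support)
  rw [heq] at hu
  exact hdisj u c.start_mem_support hu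

lemma pathExt [Fintype V] (H : G.Subgraph) (hH : Maximal23Subgraph H) {t₁ t₂ : V}
    (hne : t₁ ≠ t₂) (P : G.Walk t₁ t₂) (hP : P.IsPath)
    (ht₁H : t₁ ∈ H.verts) (ht₂H : t₂ ∈ H.verts)
    (h₁ : subDeg H t₁ = 2) (h₂ : subDeg H t₂ = 2)
    (hint : ∀ v ∈ P.support, v ≠ t₁ → v ≠ t₂ → v ∉ H.verts) :
    ∀ x ∈ P.support, x ∈ H.verts := by
  have h23 : Is23Subgraph (H ⊔ P.toSubgraph) := by
    intro v hv
    rw [Subgraph.verts_sup, Set.mem_union] at hv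
    show ((H ⊔ P.toSubgraph).neighborSet v).ncard = 2 ∨
      ((H ⊔ P.toSubgraph).neighborSet v).ncard = 3
    rw [Subgraph.neighborSet_sup]
    by_cases hvs : v ∈ P.support
    · by_cases hvH : v ∈ H.verts
      · have hv12 : v = t₁ ∨ v = t₂ := by
          by_contra hcon
          push_neg at hcon
          exact hint v hvs hcon.1 hcon.2 hvH
        have hHv : (H.neighborSet v).ncard = 2 := by
          rcases hv12 with rfl | rfl
          · exact h₁
          · exact h₂
        have hPv : (P.toSubgraph.neighborSet v).ncard = 1 := by
          rcases hv12 with rfl | rfl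
          · exact nbr_start_path P hP hne
          · exact nbr_end_path P hP hne
        have hub := Set.ncard_union_le (H.neighborSet v) (P.toSubgraph.neighborSet v)
        have hlb : 2 ≤ (H.neighborSet v ∪ P.toSubgraph.neighborSet v).ncard := by
          rw [← hHv]
          exact Set.ncard_le_ncard Set.subset_union_left (Set.toFinite _)
        omega
      · have hv1 : v ≠ t₁ := fun h => hvH (h ▸ ht₁H)
        have hv2 : v ≠ t₂ := fun h => hvH (h ▸ ht₂H)
        rw [nbr_empty_of_not_mem_verts H hvH, Set.empty_union]
        exact Or.inl (nbr_mid_path P hP v hvs hv1 hv2)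
    · have hvH : v ∈ H.verts :=
        hv.resolve_right (fun h => hvs ((Walk.mem_verts_toSubgraph P).mp h))
      rw [toSubgraph_nbr_empty P hvs, Set.union_empty]
      exact hH.1 v hvH
  have heq := hH.2 _ h23 le_sup_left
  intro x hx
  have hx' : x ∈ (H ⊔ P.toSubgraph).verts := by
    rw [Subgraph.verts_sup]
    exact Or.inr ((Walk.mem_verts_toSubgraph P).mpr hx)
  rwa [heq] at hx'

/-- Let `H` be a maximal 2-3-subgraph of a finite graph `G` and let `C` be a cycle of
`G` none of whose vertices is a branchpoint of `H`. Then `C` intersects `V(H)` in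
exactly one vertex, or `V(C) ⊆ V(H)`. -/
theorem cycle_without_branchpoints [Fintype V] {G : SimpleGraph V} (H : G.Subgraph)
    (hH : Maximal23Subgraph H) (u : V) (c : G.Walk u u) (hc : c.IsCycle)
    (hnb : ∀ x ∈ c.support, subDeg H x ≠ 3) :
    (∃ w : V, {x | x ∈ c.support} ∩ H.verts = {w}) ∨
      ∀ x ∈ c.support, x ∈ H.verts := by
  classical
  by_cases hall : ∀ x ∈ c.support, x ∈ H.verts
  · exact Or.inr hall
  push_neg at hall
  obtain ⟨y, hy, hyH⟩ := hall
  left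
  by_cases hA : ∃ a ∈ c.support, a ∈ H.verts
  swap
  · push_neg at hA
    exact (cycleExt H hH c hc hA).elim
  obtain ⟨a, haSup, haH⟩ := hA
  have hay : a ≠ y := fun h => hyH (h ▸ haH)
  set c' := c.rotate y hy with hc'def
  have hc' : c'.IsCycle := hc.rotate hy
  have hsup : ∀ x, x ∈ c'.support ↔ x ∈ c.support := by
    intro x
    constructor
    · intro h
      exact List.mem_of_mem_tail
        (((Walk.support_rotate c y hy).mem_iff).mp (mem_support_tail_of_closed c' hc'.ne_nil x h))
    · intro h
      exact List.mem_of_mem_tail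
        (((Walk.support_rotate c y hy).mem_iff).mpr (mem_support_tail_of_closed c hc.ne_nil x h))
  have ha' : a ∈ c'.support := (hsup a).mpr haSup
  set q₁ := c'.takeUntil a ha' with hq₁def
  set q₂ := c'.dropUntil a ha' with hq₂def
  have hspec : q₁.append q₂ = c' := c'.take_spec ha'
  have hsupc' : c'.support = q₁.support ++ q₂.support.tail := by
    rw [← hspec, Walk.support_append]
  have hq₁cons : q₁.support = y :: q₁.support.tail := q₁.support_eq_cons
  have hq₂cons : q₂.support = a :: q₂.support.tail := q₂.support_eq_cons
  have htail : c'.support.tail = q₁.support.tail ++ q₂.support.tail := by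
    rw [hsupc']
    conv_lhs => rw [hq₁cons]
    rfl
  have hnd : (q₁.support.tail ++ q₂.support.tail).Nodup := htail ▸ hc'.support_nodup
  rw [List.nodup_append] at hnd
  obtain ⟨hndA, hndB, hdisjAB⟩ := hnd
  have hyB : y ∈ q₂.support.tail := by
    have hy2 : y ∈ q₂.support := q₂.end_mem_support
    rw [hq₂cons, List.mem_cons] at hy2
    exact hy2.resolve_left (fun h => hay h.symm)
  have hyA : y ∉ q₁.support.tail := fun h => hdisjAB _ h _ hyB rfl
  have haA : a ∈ q₁.support.tail := by
    have ha1 : a ∈ q₁.support := q₁.end_mem_support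
    rw [hq₁cons, List.mem_cons] at ha1
    exact ha1.resolve_left hay
  have haB : a ∉ q₂.support.tail := fun h => hdisjAB _ haA _ h rfl
  have hndL1 : q₁.support.Nodup := by
    rw [hq₁cons]
    exact List.nodup_cons.mpr ⟨hyA, hndA⟩
  have hndL2 : q₂.support.Nodup := by
    rw [hq₂cons]
    exact List.nodup_cons.mpr ⟨haB, hndB⟩
  have hcommon : ∀ v, v ∈ q₁.support → v ∈ q₂.support → v = y ∨ v = a := by
    intro v h1 h2
    rw [hq₁cons, List.mem_cons] at h1
    rw [hq₂cons, List.mem_cons] at h2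
    rcases h1 with rfl | h1
    · exact Or.inl rfl
    rcases h2 with rfl | h2
    · exact Or.inr rfl
    exact absurd h2 (fun hh => hdisjAB _ h1 _ hh rfl)
  obtain ⟨t₁, p₁, r₁, ht₁, heq₁, hprop₁⟩ := exists_prefix_until (S := H.verts) q₁ haH
  obtain ⟨t₂, p₂, r₂, ht₂, heq₂, hprop₂⟩ :=
    exists_prefix_until (S := H.verts) q₂.reverse haH
  have hp₁sub : ∀ v ∈ p₁.support, v ∈ q₁.support := by
    intro v hv
    rw [heq₁]
    exact (Walk.mem_support_append_iff p₁ r₁).mpr (Or.inl hv)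
  have hp₂sub : ∀ v ∈ p₂.support, v ∈ q₂.support := by
    intro v hv
    have hv' : v ∈ q₂.reverse.support := by
      rw [heq₂]
      exact (Walk.mem_support_append_iff p₂ r₂).mpr (Or.inl hv)
    rwa [Walk.support_reverse, List.mem_reverse] at hv'
  have hp₁nd : p₁.support.Nodup := by
    have h' := hndL1
    rw [heq₁, Walk.support_append, List.nodup_append] at h'
    exact h'.1
  have hndL2r : q₂.reverse.support.Nodup := by
    rw [Walk.support_reverse]
    exact List.nodup_reverse.mpr hndL2
  have hp₂nd : p₂.support.Nodup := by
    have h' := hndL2r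
    rw [heq₂, Walk.support_append, List.nodup_append] at h'
    exact h'.1
  have ht₁p : t₁ ∈ p₁.support := p₁.end_mem_support
  have ht₂p : t₂ ∈ p₂.support := p₂.end_mem_support
  by_cases hT : t₁ = t₂
  · -- conclude the intersection is {a}
    have ht₁a : t₁ = a := by
      rcases hcommon t₁ (hp₁sub t₁ ht₁p) (by rw [hT]; exact hp₂sub t₂ ht₂p) with rfl | h
      · exact absurd ht₁ hyH
      · exact h
    have ht₂a : t₂ = a := hT.symm.trans ht₁a
    have hap₁ : a ∈ p₁.support := ht₁a ▸ ht₁p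
    have hap₂ : a ∈ p₂.support := ht₂a ▸ ht₂p
    have hr₁ : r₁.support.tail = [] := by
      cases r₁ with
      | nil => rfl
      | cons h w =>
        exfalso
        have haTail : a ∈ (Walk.cons h w).support.tail := by
          rw [Walk.support_cons, List.tail_cons]
          exact w.end_mem_support
        have h' := hndL1
        rw [heq₁, Walk.support_append, List.nodup_append] at h'
        exact h'.2.2 _ hap₁ _ haTail rfl
    have hr₂ : r₂.support.tail = [] := by
      cases r₂ with
      | nil => rfl
      | cons h w =>
        exfalso
        have haTail : a ∈ (Walk.cons h w).support.tail := by
          rw [Walk.support_cons, List.tail_cons]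
          exact w.end_mem_support
        have h' := hndL2r
        rw [heq₂, Walk.support_append, List.nodup_append] at h'
        exact h'.2.2 _ hap₂ _ haTail rfl
    have hq₁eq : q₁.support = p₁.support := by
      rw [heq₁, Walk.support_append, hr₁, List.append_nil]
    have hq₂eq : q₂.reverse.support = p₂.support := by
      rw [heq₂, Walk.support_append, hr₂, List.append_nil]
    refine ⟨a, ?_⟩
    ext x
    simp only [Set.mem_inter_iff, Set.mem_setOf_eq, Set.mem_singleton_iff]
    constructor
    · rintro ⟨hxs, hxH⟩
      have hx' : x ∈ c'.support := (hsup x).mpr hxs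
      rw [← hspec, Walk.mem_support_append_iff] at hx'
      by_contra hxa
      rcases hx' with h | h
      · rw [hq₁eq] at h
        exact hprop₁ x h (fun hh => hxa (hh.trans ht₁a)) hxH
      · have h2 : x ∈ q₂.reverse.support := by
          rwa [Walk.support_reverse, List.mem_reverse]
        rw [hq₂eq] at h2
        exact hprop₂ x h2 (fun hh => hxa (hh.trans ht₂a)) hxH
    · rintro rfl
      exact ⟨haSup, haH⟩
  · exfalso
    have ht₁c : t₁ ∈ c.support :=
      (hsup t₁).mp (c'.support_takeUntil_subset ha' (hp₁sub t₁ ht₁p))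
    have ht₂c : t₂ ∈ c.support :=
      (hsup t₂).mp (c'.support_dropUntil_subset ha' (hp₂sub t₂ ht₂p))
    have hdeg : ∀ t ∈ c.support, t ∈ H.verts → subDeg H t = 2 := fun t hts htH =>
      (hH.1 t htH).resolve_right (hnb t hts)
    have hta₁ : ∀ v, v ∈ p₁.support → v ∈ H.verts → v = t₁ := by
      intro v hv hvH
      by_contra hne
      exact hprop₁ v hv hne hvH
    have hta₂ : ∀ v, v ∈ p₂.support → v ∈ H.verts → v = t₂ := by
      intro v hv hvH
      by_contra hne
      exact hprop₂ v hv hne hvH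
    set P := p₁.reverse.append p₂ with hPdef
    have hPmem : ∀ v, v ∈ P.support ↔ v ∈ p₁.support ∨ v ∈ p₂.support := by
      intro v
      rw [hPdef, Walk.mem_support_append_iff, Walk.support_reverse, List.mem_reverse]
    have hPpath : P.IsPath := by
      rw [Walk.isPath_def, hPdef, Walk.support_append, List.nodup_append]
      refine ⟨by rw [Walk.support_reverse]; exact List.nodup_reverse.mpr hp₁nd,
        hp₂nd.sublist (List.tail_sublist _), ?_⟩
      intro v hv1 v' hv2 hvv
      subst hvv
      have hv1' : v ∈ p₁.support := by
        rwa [Walk.support_reverse, List.mem_reverse] at hv1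
      have hv2' : v ∈ p₂.support := List.mem_of_mem_tail hv2
      rcases hcommon v (hp₁sub v hv1') (hp₂sub v hv2') with rfl | rfl
      · have hcons : p₂.support = v :: p₂.support.tail := p₂.support_eq_cons
        rw [hcons, List.nodup_cons] at hp₂nd
        exact hp₂nd.1 hv2
      · exact hT ((hta₁ v hv1' haH).symm.trans (hta₂ v hv2' haH))
    have hint : ∀ v ∈ P.support, v ≠ t₁ → v ≠ t₂ → v ∉ H.verts := by
      intro v hv hv1 hv2
      rcases (hPmem v).mp hv with h | h
      · exact hprop₁ v h hv1
      · exact hprop₂ v h hv2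
    have hsubset := pathExt H hH hT P hPpath ht₁ ht₂
      (hdeg t₁ ht₁c ht₁) (hdeg t₂ ht₂c ht₂) hint
    exact hyH (hsubset y ((hPmem y).mpr (Or.inl p₁.start_mem_support)))
end
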